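/- The Herbrand assembly N = (ℕ, ℕ, ν), where ν(n) = ↑_{!ℕ} {⟨n⟩}, together with the morphisms 0 : 1 → N (picking out 0) and s : N → N (the successor function), is a natural numbers object in the category HAsm: for every Herbrand assembly A and morphisms a : 1 → A and g : A → A there is a unique morphism h : N → A with h ∘ 0 = a and h ∘ s = g ∘ h. -/

import Mathlib

open CategoryTheory Encodable Denumerable

namespace Herbrand

/-- Kleene application in Kleene's first pca `K₁`: `e · n`. -/
def kap (e n : ℕ) : Part ℕ := Nat.Partrec.Code.eval (ofNat Nat.Partrec.Code e) n

/-- `kapIn r n S` : `r · n` is defined and its value lies in `S`. -/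
def kapIn (r n : ℕ) (S : Set ℕ) : Prop := ∃ v ∈ kap r n, v ∈ S

/-- The list coded by a natural number (canonical bijection `ℕ ≃ List ℕ`). -/
def toL (n : ℕ) : List ℕ := ofNat (List ℕ) n

/-- The code of a list of natural numbers. -/
def ofL (l : List ℕ) : ℕ := encode l

@[simp] lemma toL_ofL (l : List ℕ) : toL (ofL l) = l := ofNat_encode l

/-- `!A` : the set of codes of lists all of whose entries lie in `A`. -/
def bang (A : Set ℕ) : Set ℕ := {n | ∀ x ∈ toL n, x ∈ A}

/-- `m ⪯ n` : every entry of the list coded by `m` is an entry of the list coded by `n`. -/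
def sle (m n : ℕ) : Prop := ∀ x ∈ toL m, x ∈ toL n

lemma sle_refl (m : ℕ) : sle m m := fun _ hx => hx

lemma sle_trans {m n k : ℕ} (h1 : sle m n) (h2 : sle n k) : sle m k :=
  fun x hx => h2 x (h1 x hx)

/-- `S` is upward closed in `!A`. -/
def UpwardClosedIn (A S : Set ℕ) : Prop :=
  ∀ m ∈ S, ∀ n ∈ bang A, sle m n → n ∈ S

/-- `↑_{!A} S` : the set of `n ∈ !A` with `m ⪯ n` for some `m ∈ S`. -/
def upClo (A S : Set ℕ) : Set ℕ := {n | n ∈ bang A ∧ ∃ m ∈ S, sle m n}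

lemma mem_bang_univ (n : ℕ) : n ∈ bang Set.univ := fun x _ => Set.mem_univ x

/-- From a partial recursive function we get a `K₁`-code for it. -/
theorem exists_kap_eq {f : ℕ →. ℕ} (hf : Nat.Partrec f) : ∃ e, ∀ n, kap e n = f n := by
  obtain ⟨c, hc⟩ := Nat.Partrec.Code.exists_code.mp hf
  exact ⟨encode c, fun n => by simp [kap, hc]⟩


/-- A Herbrand assembly over `K₁`. -/
structure HAsmObj where
  carrier : Type
  real : Set ℕ
  rz : carrier → Set ℕ
  rz_sub : ∀ a, rz a ⊆ bang real
  rz_ne : ∀ a, (rz a).Nonempty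
  rz_up : ∀ a, UpwardClosedIn real (rz a)

/-- `r ∈ ℕ` tracks the function `f` between the underlying sets of two Herbrand assemblies. -/
def Tracks (B A : HAsmObj) (f : B.carrier → A.carrier) (r : ℕ) : Prop :=
  (∀ m ∈ bang B.real, kapIn r m (bang A.real)) ∧
  ∀ b : B.carrier, ∀ m ∈ B.rz b, kapIn r m (A.rz (f b))

/-- A morphism of Herbrand assemblies: a tracked function. -/
structure HHom (B A : HAsmObj) where
  toFun : B.carrier → A.carrier
  tracked : ∃ r, Tracks B A toFun r

theorem HHom.ext' {B A : HAsmObj} {f g : HHom B A} (h : f.toFun = g.toFun) : f = g := by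
  cases f; cases g; simpa using h

theorem tracks_id_fun (B A : HAsmObj) (f : B.carrier → A.carrier)
    (h1 : ∀ m ∈ bang B.real, m ∈ bang A.real)
    (h2 : ∀ b : B.carrier, ∀ m ∈ B.rz b, m ∈ A.rz (f b)) : ∃ r, Tracks B A f r := by
  obtain ⟨e, he⟩ := exists_kap_eq (Nat.Partrec.of_primrec Nat.Primrec.id)
  exact ⟨e, fun m hm => ⟨m, by simp [he], h1 m hm⟩,
    fun b m hm => ⟨m, by simp [he], h2 b m hm⟩⟩

theorem tracked_id (A : HAsmObj) : ∃ r, Tracks A A id r :=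
  tracks_id_fun A A id (fun _ h => h) (fun _ _ h => h)

theorem tracked_comp {C B A : HAsmObj} {f : C.carrier → B.carrier} {g : B.carrier → A.carrier}
    (hf : ∃ r, Tracks C B f r) (hg : ∃ s, Tracks B A g s) : ∃ t, Tracks C A (g ∘ f) t := by
  obtain ⟨r, hr1, hr2⟩ := hf
  obtain ⟨s, hs1, hs2⟩ := hg
  refine ⟨encode (Nat.Partrec.Code.comp (ofNat Nat.Partrec.Code s) (ofNat Nat.Partrec.Code r)),
    ?_, ?_⟩
  · intro m hm
    obtain ⟨v, hv, hv'⟩ := hr1 m hm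
    obtain ⟨w, hw, hw'⟩ := hs1 v hv'
    exact ⟨w, by simp only [kap, Nat.Partrec.Code.eval, ofNat_encode]; exact Part.mem_bind_iff.mpr ⟨v, hv, hw⟩, hw'⟩
  · intro c m hm
    obtain ⟨v, hv, hv'⟩ := hr2 c m hm
    obtain ⟨w, hw, hw'⟩ := hs2 (f c) v hv'
    exact ⟨w, by simp only [kap, Nat.Partrec.Code.eval, ofNat_encode]; exact Part.mem_bind_iff.mpr ⟨v, hv, hw⟩, hw'⟩

/-- The category `HAsm` of Herbrand assemblies over `K₁`. -/
instance : Category HAsmObj where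
  Hom B A := HHom B A
  id A := ⟨id, tracked_id A⟩
  comp f g := ⟨g.toFun ∘ f.toFun, tracked_comp f.tracked g.tracked⟩
  id_comp f := HHom.ext' rfl
  comp_id f := HHom.ext' rfl
  assoc f g h := HHom.ext' rfl


/-- The Herbrand assembly `∇X = (X, ℕ, x ↦ !ℕ)`. -/
def nablaObj (X : Type) : HAsmObj where
  carrier := X
  real := Set.univ
  rz _ := bang Set.univ
  rz_sub _ := fun _ h => h
  rz_ne _ := ⟨0, mem_bang_univ 0⟩
  rz_up _ := fun _ _ n hn _ => hn

/-- The functor `∇ : Set → HAsm`. -/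
def Nabla : Type ⥤ HAsmObj where
  obj := nablaObj
  map f := ⟨f, tracks_id_fun _ _ f (fun _ h => h) (fun _ _ h => h)⟩
  map_id _ := HHom.ext' rfl
  map_comp _ _ := HHom.ext' rfl

/-- The underlying-set functor `Γ : HAsm → Set`. -/
def Gamma : HAsmObj ⥤ Type where
  obj A := A.carrier
  map f := TypeCat.ofHom f.toFun

/-- The realizability structure of the natural numbers object: `ν n = ↑_{!ℕ} {⟨n⟩}`. -/
def nuN (n : ℕ) : Set ℕ := upClo Set.univ {ofL [n]}

/-- The natural numbers object `N = (ℕ, ℕ, ν)` of `HAsm`. -/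
def NObj : HAsmObj where
  carrier := ℕ
  real := Set.univ
  rz := nuN
  rz_sub _ := fun _ hm => hm.1
  rz_ne n := ⟨ofL [n], mem_bang_univ _, ofL [n], rfl, sle_refl _⟩
  rz_up _ := fun m hm k hk hmk => ⟨hk, hm.2.choose, hm.2.choose_spec.1,
    sle_trans hm.2.choose_spec.2 hmk⟩

/-- The terminal object `1 = ({*}, ℕ, * ↦ !ℕ)` of `HAsm`. -/
def oneObj : HAsmObj := nablaObj PUnit

/-- The zero morphism `0 : 1 ⟶ N`. -/
def zeroH : oneObj ⟶ NObj := by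
  refine ⟨fun _ => (0 : ℕ), ?_⟩
  obtain ⟨e, he⟩ := exists_kap_eq (Nat.Partrec.of_primrec (Nat.Primrec.const (ofL [0])))
  exact ⟨e, fun m _ => ⟨ofL [0], by simp [he], mem_bang_univ _⟩,
    fun b m _ => ⟨ofL [0], by simp [he], mem_bang_univ _, ofL [0], rfl, sle_refl _⟩⟩

/-- The successor morphism `s : N ⟶ N`. -/
def succH : NObj ⟶ NObj := by
  refine ⟨(Nat.succ : ℕ → ℕ), ?_⟩
  have hp : Primrec (fun m : ℕ => ofL ((toL m).map Nat.succ)) :=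
    Primrec.encode.comp ((Primrec.ofNat (List ℕ)).list_map
      ((Primrec.succ.comp Primrec.snd).to₂))
  obtain ⟨e, he⟩ := exists_kap_eq (Nat.Partrec.of_primrec (Primrec.nat_iff.mp hp))
  refine ⟨e, fun m _ => ⟨ofL ((toL m).map Nat.succ), by simp [he], mem_bang_univ _⟩, ?_⟩
  rintro (n : ℕ) m hm
  refine ⟨ofL ((toL m).map Nat.succ), by simp [he], mem_bang_univ _, ofL [n + 1], rfl, ?_⟩
  intro x hx
  have hn : n ∈ toL m := hm.2.choose_spec.2 n (by
    have : hm.2.choose = ofL [n] := hm.2.choose_spec.1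
    rw [this]; simp)
  have hx' : x = n + 1 := by simpa using hx
  subst hx'
  simp only [toL_ofL, List.mem_map]
  exact ⟨n, hn, rfl⟩


lemma kap_partrec (r : ℕ) : Partrec (kap r) :=
  Nat.Partrec.Code.eval_part.comp (Computable.const _) Computable.id

/-- The iterated realizer: `G ra rg 0 = ra · ⟨⟩`, `G ra rg (k+1) = rg · (G ra rg k)`. -/
def Gpart (ra rg : ℕ) : ℕ →. ℕ := fun k =>
  k.rec (kap ra (ofL [])) fun _ IH => IH.bind fun i => kap rg i

lemma Gpart_partrec (ra rg : ℕ) : Partrec (Gpart ra rg) :=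
  Partrec.nat_rec Computable.id
    ((kap_partrec ra).comp (Computable.const (ofL [])))
    (((kap_partrec rg).comp (Computable.snd.comp Computable.snd)).to₂)

/-- The fold accumulating realizers over the entries of the input list. -/
def F0 (ra rg : ℕ) : ℕ →. List ℕ := fun m =>
  ((toL m).length).rec (Part.some ([] : List ℕ)) fun y IH =>
    IH.bind fun acc => (Gpart ra rg ((toL m).getD y 0)).map fun v => acc ++ toL v

lemma F0_partrec (ra rg : ℕ) : Partrec (F0 ra rg) := by
  have hlen : Computable fun m : ℕ => (toL m).length :=
    (Primrec.list_length.comp (Primrec.ofNat (List ℕ))).to_comp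
  have hgetD : Computable fun p : ℕ × (ℕ × List ℕ) => (toL p.1).getD p.2.1 0 :=
    ((Primrec.list_getD 0).comp ((Primrec.ofNat (List ℕ)).comp Primrec.fst)
      (Primrec.fst.comp Primrec.snd)).to_comp
  have happ : Computable₂ fun (p : ℕ × (ℕ × List ℕ)) (v : ℕ) => p.2.2 ++ toL v :=
    (Primrec.list_append.comp
      ((Primrec.snd.comp Primrec.snd).comp Primrec.fst)
      ((Primrec.ofNat (List ℕ)).comp Primrec.snd)).to_comp
  exact Partrec.nat_rec hlen (Computable.const ([] : List ℕ)).partrec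
    ((((Gpart_partrec ra rg).comp hgetD).map happ).to₂)

def Fpart (ra rg : ℕ) : ℕ →. ℕ := fun m => (F0 ra rg m).map encode

lemma Fpart_partrec (ra rg : ℕ) : Partrec (Fpart ra rg) :=
  (F0_partrec ra rg).map (Computable.encode.comp Computable.snd).to₂

lemma F0_eq (ra rg : ℕ) (v : ℕ → ℕ) (hv : ∀ k, v k ∈ Gpart ra rg k) (m : ℕ) :
    F0 ra rg m = Part.some (((toL m).map fun k => toL (v k)).flatten) := by
  have hG : ∀ k, Gpart ra rg k = Part.some (v k) := fun k => Part.eq_some_iff.mpr (hv k)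
  have key : ∀ i, i ≤ (toL m).length →
      (Nat.rec (Part.some ([] : List ℕ)) (fun y IH =>
        IH.bind fun acc => (Gpart ra rg ((toL m).getD y 0)).map fun w => acc ++ toL w) i
        : Part (List ℕ)) =
      Part.some ((((toL m).take i).map fun k => toL (v k)).flatten) := by
    intro i hi
    induction i with
    | zero => simp
    | succ j ih =>
      have hj : j < (toL m).length := hi
      show ((Nat.rec (Part.some ([] : List ℕ)) (fun y IH =>
        IH.bind fun acc => (Gpart ra rg ((toL m).getD y 0)).map fun w => acc ++ toL w) j
        : Part (List ℕ)).bind fun acc =>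
          (Gpart ra rg ((toL m).getD j 0)).map fun w => acc ++ toL w) = _
      rw [ih (Nat.le_of_lt hj)]
      have hget : (toL m).getD j 0 = (toL m).get ⟨j, hj⟩ := by rw [List.getD_eq_getElem (hn := hj)]; rfl
      have : (toL m).take (j + 1) = (toL m).take j ++ [(toL m).get ⟨j, hj⟩] := by
        rw [List.take_succ, List.getElem?_eq_getElem hj]; rfl
      rw [hget, hG, this]
      simp
      rw [List.take_succ]
      simp [List.getElem?_eq_getElem (by simpa using hj : j < ((toL m).map fun k => toL (v k)).length)]
  exact (key _ le_rfl).trans (by rw [List.take_length])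

lemma Fpart_eq (ra rg : ℕ) (v : ℕ → ℕ) (hv : ∀ k, v k ∈ Gpart ra rg k) (m : ℕ) :
    Fpart ra rg m = Part.some (ofL (((toL m).map fun k => toL (v k)).flatten)) := by
  rw [Fpart, F0_eq ra rg v hv m]; rfl

/-- `(N, 0, s)` is a natural numbers object in the category of Herbrand
assemblies. -/
theorem nno_in_hasm (A : HAsmObj) (a : oneObj ⟶ A) (g : A ⟶ A) :
    ∃! h : NObj ⟶ A, zeroH ≫ h = a ∧ succH ≫ h = h ≫ g := by
  obtain ⟨ra, hra1, hra2⟩ := a.tracked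
  obtain ⟨rg, hrg1, hrg2⟩ := g.tracked
  set hfun : ℕ → A.carrier :=
    fun n => Nat.rec (a.toFun PUnit.unit) (fun _ x => g.toFun x) n with hfun_def
  have hGmem : ∀ k, ∃ w ∈ Gpart ra rg k, w ∈ A.rz (hfun k) := by
    intro k
    induction k with
    | zero => exact hra2 PUnit.unit (ofL []) (mem_bang_univ _)
    | succ j ih =>
      obtain ⟨w, hw, hw'⟩ := ih
      obtain ⟨u, hu, hu'⟩ := hrg2 (hfun j) w hw'
      exact ⟨u, Part.mem_bind_iff.mpr ⟨w, hw, hu⟩, hu'⟩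
  choose v hv1 hv2 using hGmem
  obtain ⟨e, he⟩ := exists_kap_eq (Partrec.nat_iff.mp (Fpart_partrec ra rg))
  have heval : ∀ m, kap e m = Part.some (ofL (((toL m).map fun k => toL (v k)).flatten)) :=
    fun m => (he m).trans (Fpart_eq ra rg v hv1 m)
  have hmem_flat : ∀ m x, x ∈ toL (ofL (((toL m).map fun k => toL (v k)).flatten)) ↔
      ∃ k ∈ toL m, x ∈ toL (v k) := by
    intro m x
    simp only [toL_ofL, List.mem_flatten, List.mem_map]
    constructor
    · rintro ⟨l, ⟨k, hk, rfl⟩, hx⟩; exact ⟨k, hk, hx⟩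
    · rintro ⟨k, hk, hx⟩; exact ⟨toL (v k), ⟨k, hk, rfl⟩, hx⟩
  have hbang : ∀ m, ofL (((toL m).map fun k => toL (v k)).flatten) ∈ bang A.real := by
    intro m x hx
    obtain ⟨k, _, hxk⟩ := (hmem_flat m x).mp hx
    exact A.rz_sub (hfun k) (hv2 k) x hxk
  have htracks : Tracks NObj A hfun e := by
    constructor
    · intro m _
      exact ⟨_, by rw [heval m]; exact Part.mem_some _, hbang m⟩
    · intro n m hm
      obtain ⟨_, m', hm', hsle⟩ := hm
      have hn : n ∈ toL m := by
        subst hm'; exact hsle n (by rw [toL_ofL]; exact List.mem_singleton_self _)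
      refine ⟨_, by rw [heval m]; exact Part.mem_some _, ?_⟩
      refine A.rz_up (hfun n) (v n) (hv2 n) _ (hbang m) ?_
      intro x hx
      exact (hmem_flat m x).mpr ⟨n, hn, hx⟩
  refine ⟨⟨hfun, e, htracks⟩, ⟨?_, ?_⟩, ?_⟩
  · exact HHom.ext' (funext fun u => by cases u; rfl)
  · exact HHom.ext' rfl
  · rintro h' ⟨h1, h2⟩
    refine HHom.ext' (funext fun n => ?_)
    induction n with
    | zero => exact congrFun (congrArg HHom.toFun h1) PUnit.unit
    | succ j ih =>
      have h2' : h'.toFun (j + 1) = g.toFun (h'.toFun j) :=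
        congrFun (congrArg HHom.toFun h2) j
      exact h2'.trans (congrArg g.toFun ih)

end Herbrand
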